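/- Let W be a finite group acting linearly on a finite-dimensional complex vector space h, and let P be a prime ideal of the polynomial ring S(h) = ℂ[h*] whose zero set V(P) ⊆ h* is a coset λ₀ + a* of a linear subspace a* ⊆ h*. Let Q = ⋂_{w∈W} wP. Then with respect to the filtration by polynomial degree, the zero set of the graded ideal gr(Q) equals W·a*, and the zero set in h*//W of gr(P ∩ S(h)^W) equals q(a*), where q : h* → h*//W is the quotient map. -/

import Mathlib

open MvPolynomial

namespace GrAffineAux

variable {n : ℕ}

noncomputable def Phi (μ x : Fin n → ℂ) : MvPolynomial (Fin n) ℂ →ₐ[ℂ] Polynomial ℂ :=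
  MvPolynomial.aeval (fun i => Polynomial.C (μ i) + Polynomial.C (x i) * Polynomial.X)

lemma eval_Phi (μ x : Fin n → ℂ) (t : ℂ) (p : MvPolynomial (Fin n) ℂ) :
    (Phi μ x p).eval t = MvPolynomial.eval (μ + t • x) p := by
  induction p using MvPolynomial.induction_on with
  | C a => simp [Phi]
  | add p q hp hq => simp [map_add, hp, hq]
  | mul_X p i hp =>
    simp only [Phi] at hp ⊢
    simp only [map_mul, Polynomial.eval_mul, hp, MvPolynomial.aeval_X, MvPolynomial.eval_mul,
      MvPolynomial.eval_X, Polynomial.eval_add, Polynomial.eval_C, Polynomial.eval_mul,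
      Polynomial.eval_X, Pi.add_apply, Pi.smul_apply, smul_eq_mul]
    ring

lemma coeff_prod_of_natDegree_le' {ι : Type*} (s : Finset ι) (f : ι → Polynomial ℂ)
    (e : ι → ℕ) (h : ∀ i ∈ s, (f i).natDegree ≤ e i) :
    (∏ i ∈ s, f i).coeff (∑ i ∈ s, e i) = ∏ i ∈ s, (f i).coeff (e i) := by
  induction s using Finset.cons_induction with
  | empty => simp
  | cons a s ha ih =>
    rw [Finset.prod_cons, Finset.sum_cons,
      Polynomial.coeff_mul_add_eq_of_natDegree_le (h a (Finset.mem_cons_self a s))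
        ((Polynomial.natDegree_prod_le s f).trans
          (Finset.sum_le_sum fun i hi => h i (Finset.mem_cons_of_mem hi))),
      ih fun i hi => h i (Finset.mem_cons_of_mem hi), Finset.prod_cons]

lemma natDegree_lin_le (a b : ℂ) :
    (Polynomial.C a + Polynomial.C b * Polynomial.X).natDegree ≤ 1 := by
  refine (Polynomial.natDegree_add_le _ _).trans ?_
  simp only [Polynomial.natDegree_C, max_le_iff, Nat.zero_le, true_and]
  exact (Polynomial.natDegree_C_mul_le _ _).trans Polynomial.natDegree_X_le

lemma natDegree_Phi_monomial_le (μ x : Fin n → ℂ) (d : Fin n →₀ ℕ) (c : ℂ) :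
    (Phi μ x (MvPolynomial.monomial d c)).natDegree ≤ d.degree := by
  rw [Phi, MvPolynomial.aeval_monomial]
  refine (Polynomial.natDegree_C_mul_le _ _).trans ?_
  · refine (Polynomial.natDegree_prod_le _ _).trans ?_
    refine Finset.sum_le_sum fun i _ => ?_
    refine (Polynomial.natDegree_pow_le).trans ?_
    have h1 := natDegree_lin_le (μ i) (x i)
    calc d i * (Polynomial.C (μ i) + Polynomial.C (x i) * Polynomial.X).natDegree
        ≤ d i * 1 := Nat.mul_le_mul_left _ h1
      _ = d i := mul_one _

lemma natDegree_Phi_le (μ x : Fin n → ℂ) (p : MvPolynomial (Fin n) ℂ) :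
    (Phi μ x p).natDegree ≤ p.totalDegree := by
  conv_lhs => rw [p.as_sum]
  rw [map_sum]
  refine Polynomial.natDegree_sum_le_of_forall_le _ _ fun d hd => ?_
  exact (natDegree_Phi_monomial_le μ x d _).trans (MvPolynomial.le_totalDegree hd)

lemma coeff_Phi_monomial_top (μ x : Fin n → ℂ) (d : Fin n →₀ ℕ) (c : ℂ) :
    (Phi μ x (MvPolynomial.monomial d c)).coeff d.degree
      = MvPolynomial.eval x (MvPolynomial.monomial d c) := by
  rw [Phi, MvPolynomial.aeval_monomial, MvPolynomial.eval_monomial]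
  rw [Polynomial.algebraMap_eq, Polynomial.coeff_C_mul]
  congr 1
  have hdeg : d.degree = ∑ i ∈ d.support, d i := rfl
  rw [Finsupp.prod, Finsupp.prod, hdeg,
    coeff_prod_of_natDegree_le' d.support _ (fun i => d i) ?_]
  · refine Finset.prod_congr rfl fun i _ => ?_
    have h1 := natDegree_lin_le (μ i) (x i)
    have := Polynomial.coeff_pow_of_natDegree_le (m := d i) h1
    rw [mul_one] at this
    rw [this]
    congr 1
    simp
  · intro i _
    refine Polynomial.natDegree_pow_le.trans ?_
    have h1 := natDegree_lin_le (μ i) (x i)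
    calc d i * _ ≤ d i * 1 := Nat.mul_le_mul_left _ h1
      _ = d i := mul_one _

lemma coeff_Phi (μ x : Fin n → ℂ) (p : MvPolynomial (Fin n) ℂ) (d : ℕ)
    (hd : p.totalDegree ≤ d) :
    (Phi μ x p).coeff d
      = MvPolynomial.eval x (MvPolynomial.homogeneousComponent d p) := by
  have h1 : (Phi μ x p).coeff d
      = ∑ dd ∈ p.support, (Phi μ x (MvPolynomial.monomial dd (coeff dd p))).coeff d := by
    conv_lhs => rw [p.as_sum]
    rw [map_sum, Polynomial.finset_sum_coeff]
  have h2 : MvPolynomial.eval x (MvPolynomial.homogeneousComponent d p)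
      = ∑ dd ∈ p.support, MvPolynomial.eval x
          (MvPolynomial.homogeneousComponent d (MvPolynomial.monomial dd (coeff dd p))) := by
    conv_lhs => rw [p.as_sum]
    rw [map_sum, map_sum]
  rw [h1, h2]
  refine Finset.sum_congr rfl fun dd hdd => ?_
  have hle : dd.degree ≤ d := by
    have := MvPolynomial.le_totalDegree hdd
    exact le_trans this hd
  have hmem : (MvPolynomial.monomial dd (coeff dd p)) ∈
      homogeneousSubmodule (Fin n) ℂ dd.degree :=
    (MvPolynomial.mem_homogeneousSubmodule _ _).mpr (isHomogeneous_monomial _ rfl)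
  rcases eq_or_lt_of_le hle with heq | hlt
  · rw [← heq, coeff_Phi_monomial_top, MvPolynomial.homogeneousComponent_of_mem hmem]
    simp
  · rw [Polynomial.coeff_eq_zero_of_natDegree_lt
      (lt_of_le_of_lt (natDegree_Phi_monomial_le μ x dd _) hlt),
      MvPolynomial.homogeneousComponent_of_mem hmem, if_neg (by omega)]
    simp

lemma vanish {b : Submodule ℂ (Fin n → ℂ)} (μ : Fin n → ℂ) {x : Fin n → ℂ} (hx : x ∈ b)
    (p : MvPolynomial (Fin n) ℂ) (hv : ∀ v ∈ b, MvPolynomial.eval (μ + v) p = 0) :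
    MvPolynomial.eval x (MvPolynomial.homogeneousComponent p.totalDegree p) = 0 := by
  have h0 : Phi μ x p = 0 := by
    apply Polynomial.funext
    intro t
    rw [eval_Phi]
    simpa using hv (t • x) (Submodule.smul_mem b t hx)
  rw [← coeff_Phi μ x p p.totalDegree le_rfl, h0]
  simp

lemma prod_ne {ι : Type*} (x : Fin n → ℂ) (s : Finset ι) (g : ι → MvPolynomial (Fin n) ℂ)
    (hdeg : ∀ i ∈ s, (g i).totalDegree ≤ 1)
    (hev : ∀ i ∈ s, MvPolynomial.eval x (MvPolynomial.homogeneousComponent 1 (g i)) ≠ 0) :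
    MvPolynomial.eval x (MvPolynomial.homogeneousComponent
      (∏ i ∈ s, g i).totalDegree (∏ i ∈ s, g i)) ≠ 0 := by
  set p := ∏ i ∈ s, g i with hp
  have hle : p.totalDegree ≤ s.card := by
    refine (MvPolynomial.totalDegree_finset_prod s g).trans ?_
    rw [Finset.card_eq_sum_ones]
    exact Finset.sum_le_sum hdeg
  have key : MvPolynomial.eval x (MvPolynomial.homogeneousComponent s.card p)
      = ∏ i ∈ s, MvPolynomial.eval x (MvPolynomial.homogeneousComponent 1 (g i)) := by
    rw [← coeff_Phi 0 x p s.card hle, hp, map_prod]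
    rw [show s.card = ∑ _i ∈ s, 1 from by simp,
      coeff_prod_of_natDegree_le' s _ (fun _ => 1)
        (fun i hi => (natDegree_Phi_le 0 x (g i)).trans (hdeg i hi))]
    exact Finset.prod_congr rfl fun i hi => coeff_Phi 0 x (g i) 1 (hdeg i hi)
  have hne : MvPolynomial.eval x (MvPolynomial.homogeneousComponent s.card p) ≠ 0 := by
    rw [key]
    exact Finset.prod_ne_zero_iff.mpr hev
  have htd : p.totalDegree = s.card := by
    refine le_antisymm hle ?_
    by_contra hc
    push_neg at hc
    rw [MvPolynomial.homogeneousComponent_eq_zero _ _ hc] at hne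
    simp at hne
  rw [htd]
  exact hne

noncomputable def linPoly (φ : (Fin n → ℂ) →ₗ[ℂ] ℂ) : MvPolynomial (Fin n) ℂ :=
  ∑ i, MvPolynomial.C (φ fun j => if i = j then 1 else 0) * MvPolynomial.X i

lemma eval_linPoly (φ : (Fin n → ℂ) →ₗ[ℂ] ℂ) (v : Fin n → ℂ) :
    MvPolynomial.eval v (linPoly φ) = φ v := by
  rw [LinearMap.pi_apply_eq_sum_univ φ v, linPoly]
  rw [map_sum]
  refine Finset.sum_congr rfl fun i _ => ?_
  simp [smul_eq_mul, mul_comm]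

lemma linPoly_isHomogeneous (φ : (Fin n → ℂ) →ₗ[ℂ] ℂ) : (linPoly φ).IsHomogeneous 1 :=
  MvPolynomial.IsHomogeneous.sum _ _ _ fun i _ => MvPolynomial.isHomogeneous_C_mul_X _ i

lemma hc_self {p : MvPolynomial (Fin n) ℂ} {m : ℕ} (h : p.IsHomogeneous m) :
    MvPolynomial.homogeneousComponent m p = p := by
  rw [MvPolynomial.homogeneousComponent_of_mem
    ((MvPolynomial.mem_homogeneousSubmodule _ _).mpr h), if_pos rfl]

lemma hc_one_affine {q : MvPolynomial (Fin n) ℂ} (hq : q.IsHomogeneous 1) (c : ℂ) :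
    MvPolynomial.homogeneousComponent 1 (q + MvPolynomial.C c) = q := by
  rw [map_add, hc_self hq, MvPolynomial.homogeneousComponent_eq_zero, add_zero]
  rw [MvPolynomial.totalDegree_C]
  omega

lemma totalDegree_affine_le {q : MvPolynomial (Fin n) ℂ} (hq : q.IsHomogeneous 1) (c : ℂ) :
    (q + MvPolynomial.C c).totalDegree ≤ 1 := by
  refine (MvPolynomial.totalDegree_add _ _).trans ?_
  simp [MvPolynomial.totalDegree_C, hq.totalDegree_le]

lemma exists_dual_forall_ne {V : Type*} [AddCommGroup V] [Module ℂ V] {ι : Type*}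
    (s : Finset ι) (z : ι → V) (hz : ∀ i ∈ s, z i ≠ 0) :
    ∃ ψ : V →ₗ[ℂ] ℂ, ∀ i ∈ s, ψ (z i) ≠ 0 := by
  classical
  induction s using Finset.cons_induction with
  | empty => exact ⟨0, by simp⟩
  | cons a s ha ih =>
    obtain ⟨ψ, hψ⟩ := ih fun i hi => hz i (Finset.mem_cons_of_mem hi)
    have hza : z a ≠ 0 := hz a (Finset.mem_cons_self a s)
    obtain ⟨ψ', hψ'⟩ : ∃ ψ' : V →ₗ[ℂ] ℂ, ψ' (z a) ≠ 0 := by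
      by_contra h
      push_neg at h
      exact hza ((Module.forall_dual_apply_eq_zero_iff ℂ (z a)).mp h)
    obtain ⟨c, hc⟩ := Infinite.exists_notMem_finset
      ((Finset.cons a s ha).image fun i => -(ψ (z i)) / (ψ' (z i)))
    refine ⟨ψ + c • ψ', fun i hi => ?_⟩
    have hi' : ψ' (z i) ≠ 0 ∨ ψ (z i) ≠ 0 := by
      rcases Finset.mem_cons.mp hi with rfl | hmem
      · exact Or.inl hψ'
      · exact Or.inr (hψ i hmem)
    simp only [LinearMap.add_apply, LinearMap.smul_apply, smul_eq_mul]
    intro habs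
    rcases hi' with h' | h'
    · apply hc
      refine Finset.mem_image.mpr ⟨i, hi, ?_⟩
      field_simp
      linear_combination -habs
    · rcases eq_or_ne (ψ' (z i)) 0 with h0 | h0
      · rw [h0, mul_zero, add_zero] at habs
        exact h' habs
      · apply hc
        refine Finset.mem_image.mpr ⟨i, hi, ?_⟩
        field_simp
        linear_combination -habs

lemma exists_functional (b : Submodule ℂ (Fin n → ℂ)) {ι : Type*} (s : Finset ι)
    (y : ι → Fin n → ℂ) (hy : ∀ i ∈ s, y i ∉ b) :
    ∃ φ : (Fin n → ℂ) →ₗ[ℂ] ℂ, (∀ v ∈ b, φ v = 0) ∧ ∀ i ∈ s, φ (y i) ≠ 0 := by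
  obtain ⟨ψ, hψ⟩ := exists_dual_forall_ne s (fun i => Submodule.Quotient.mk (p := b) (y i))
    (fun i hi => by
      rw [ne_eq, Submodule.Quotient.mk_eq_zero]
      exact hy i hi)
  refine ⟨ψ.comp b.mkQ, fun v hv => ?_, fun i hi => ?_⟩
  · simp only [LinearMap.comp_apply, Submodule.mkQ_apply]
    rw [show (Submodule.Quotient.mk v : (Fin n → ℂ) ⧸ b) = 0 from
      (Submodule.Quotient.mk_eq_zero b).mpr hv]
    simp
  · exact hψ i hi

end GrAffineAux


open MvPolynomial

/-- The common zero locus in `h* = Fin n → ℂ` of a set of polynomials. -/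
def polyZeroSet {n : ℕ} (S : Set (MvPolynomial (Fin n) ℂ)) : Set (Fin n → ℂ) :=
  {x | ∀ p ∈ S, MvPolynomial.eval x p = 0}

/-- The set of top-degree homogeneous parts (leading terms) of the nonzero elements of an
ideal `I`; it generates the associated graded ideal `gr I` for the degree filtration. -/
def leadingTerms {n : ℕ} (I : Ideal (MvPolynomial (Fin n) ℂ)) :
    Set (MvPolynomial (Fin n) ℂ) :=
  {q | ∃ p ∈ I, p ≠ 0 ∧ q = MvPolynomial.homogeneousComponent p.totalDegree p}

/-- Lemma `GrAffine`.
Let `W` be a finite group acting linearly on `h* = ℂⁿ` (action `ρ` on points, induced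
action `σ` on the polynomial ring `S(h) = ℂ[h*]`, compatibly: `(σ w p)(x) = p(ρ w⁻¹ x)`).
Let `P` be a prime ideal whose zero set is a coset `λ₀ + a*` of a linear subspace
`a* ⊆ h*`, and let `Q = ⋂_w wP`.  Then, for the degree filtration, the zero set of
`gr Q` equals `W·a*`, and the zero set (pulled back to `h*`, i.e. the preimage of
`q(a*)` under `q : h* → h*//W`) of `gr(P ∩ S(h)^W)` equals `W·a*` as well. -/
theorem grAffine
    {n : ℕ} (W : Type*) [Group W] [Fintype W]
    (σ : W →* (MvPolynomial (Fin n) ℂ ≃ₐ[ℂ] MvPolynomial (Fin n) ℂ))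
    (ρ : W →* ((Fin n → ℂ) ≃ₗ[ℂ] (Fin n → ℂ)))
    (hcompat : ∀ (w : W) (p : MvPolynomial (Fin n) ℂ) (x : Fin n → ℂ),
      MvPolynomial.eval x (σ w p) = MvPolynomial.eval (ρ w⁻¹ x) p)
    (hlin : ∀ (w : W) (p : MvPolynomial (Fin n) ℂ),
      p.IsHomogeneous 1 → (σ w p).IsHomogeneous 1)
    (P : Ideal (MvPolynomial (Fin n) ℂ)) (hP : P.IsPrime)
    (a : Submodule ℂ (Fin n → ℂ)) (l₀ : Fin n → ℂ)
    (hVP : polyZeroSet (P : Set (MvPolynomial (Fin n) ℂ)) =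
      (fun v => l₀ + v) '' (a : Set (Fin n → ℂ))) :
    (polyZeroSet
        (leadingTerms (⨅ w : W, Ideal.map ((σ w).toAlgHom.toRingHom) P)) =
      ⋃ w : W, (ρ w) '' (a : Set (Fin n → ℂ))) ∧
    ({x : Fin n → ℂ | ∀ p ∈ P, (∀ w : W, σ w p = p) →
        MvPolynomial.eval x (MvPolynomial.homogeneousComponent p.totalDegree p) = 0} =
      ⋃ w : W, (ρ w) '' (a : Set (Fin n → ℂ))) := by
  classical
  haveI := hP
  have hρmul : ∀ (w w' : W) (v : Fin n → ℂ), ρ w (ρ w' v) = ρ (w * w') v := by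
    intro w w' v; rw [map_mul]; rfl
  have hρone : ∀ v : Fin n → ℂ, ρ 1 v = v := by intro v; rw [map_one]; rfl
  have hρinv : ∀ (w : W) (v : Fin n → ℂ), ρ w⁻¹ (ρ w v) = v := by
    intro w v; rw [hρmul, inv_mul_cancel, hρone]
  have hρinv' : ∀ (w : W) (v : Fin n → ℂ), ρ w (ρ w⁻¹ v) = v := by
    intro w v; rw [hρmul, mul_inv_cancel, hρone]
  have hσmul : ∀ (w w' : W) (p : MvPolynomial (Fin n) ℂ), σ w (σ w' p) = σ (w * w') p := by
    intro w w' p; rw [map_mul]; rfl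
  have hσone : ∀ p : MvPolynomial (Fin n) ℂ, σ 1 p = p := by intro p; rw [map_one]; rfl
  have hσinv' : ∀ (w : W) (p : MvPolynomial (Fin n) ℂ), σ w (σ w⁻¹ p) = p := by
    intro w p; rw [hσmul, mul_inv_cancel, hσone]
  set J : W → Ideal (MvPolynomial (Fin n) ℂ) :=
    fun w => Ideal.map ((σ w).toAlgHom.toRingHom) P with hJdef
  have hring : ∀ (w : W) (p : MvPolynomial (Fin n) ℂ),
      ((σ w).toAlgHom.toRingHom) p = σ w p := fun w p => rfl
  have memJ2 : ∀ (w : W) (q : MvPolynomial (Fin n) ℂ), σ w⁻¹ q ∈ P → q ∈ J w := by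
    intro w q hq
    have h := Ideal.mem_map_of_mem ((σ w).toAlgHom.toRingHom) hq
    rwa [hring, hσinv'] at h
  have memJ1 : ∀ (w : W) (q : MvPolynomial (Fin n) ℂ), q ∈ J w → σ w⁻¹ q ∈ P := by
    intro w q hq
    have hle : J w ≤ Ideal.comap ((σ w⁻¹).toAlgHom.toRingHom) P := by
      rw [hJdef]
      refine Ideal.map_le_iff_le_comap.mpr ?_
      intro p hp
      rw [Ideal.mem_comap, Ideal.mem_comap, hring, hring, hσmul, inv_mul_cancel, hσone]
      exact hp
    have h := hle hq
    rwa [Ideal.mem_comap, hring] at h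
  have hvanP : ∀ p ∈ P, ∀ v ∈ a, MvPolynomial.eval (l₀ + v) p = 0 := by
    intro p hp v hv
    have hmem : l₀ + v ∈ polyZeroSet (P : Set (MvPolynomial (Fin n) ℂ)) := by
      rw [hVP]; exact ⟨v, hv, rfl⟩
    exact hmem p hp
  have hNSS : ∀ f : MvPolynomial (Fin n) ℂ,
      (∀ v ∈ a, MvPolynomial.eval (l₀ + v) f = 0) → f ∈ P := by
    intro f hf
    have h1 : f ∈ MvPolynomial.vanishingIdeal ℂ (MvPolynomial.zeroLocus ℂ P) := by
      rw [MvPolynomial.mem_vanishingIdeal_iff]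
      intro z hz
      have hzz : z ∈ polyZeroSet (P : Set (MvPolynomial (Fin n) ℂ)) := hz
      rw [hVP] at hzz
      obtain ⟨v, hv, rfl⟩ := hzz
      exact hf v hv
    rwa [MvPolynomial.IsPrime.vanishingIdeal_zeroLocus P] at h1
  have hvanJ : ∀ (w : W) (q : MvPolynomial (Fin n) ℂ), q ∈ J w →
      ∀ v ∈ a, MvPolynomial.eval (ρ w (l₀ + v)) q = 0 := by
    intro w q hq v hv
    have h1 := memJ1 w q hq
    have h2 := hcompat w (σ w⁻¹ q) (ρ w (l₀ + v))
    rw [hσinv'] at h2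
    rw [h2, hρinv]
    exact hvanP _ h1 v hv
  have hmemJ : ∀ (w : W) (f : MvPolynomial (Fin n) ℂ),
      (∀ v ∈ a, MvPolynomial.eval (ρ w (l₀ + v)) f = 0) → f ∈ J w := by
    intro w f hf
    refine memJ2 w f (hNSS _ ?_)
    intro v hv
    rw [hcompat w⁻¹ f (l₀ + v), inv_inv]
    exact hf v hv
  have key_vanish : ∀ (w : W) (u : Fin n → ℂ), u ∈ a → ∀ p : MvPolynomial (Fin n) ℂ,
      (∀ v ∈ a, MvPolynomial.eval (ρ w (l₀ + v)) p = 0) →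
      MvPolynomial.eval (ρ w u) (MvPolynomial.homogeneousComponent p.totalDegree p) = 0 := by
    intro w u hu p hp
    refine GrAffineAux.vanish (b := Submodule.map ((ρ w).toLinearMap) a) (ρ w l₀) ?_ p ?_
    · exact Submodule.mem_map.mpr ⟨u, hu, rfl⟩
    · intro v hv
      obtain ⟨v', hv', rfl⟩ := Submodule.mem_map.mp hv
      rw [show ρ w l₀ + (ρ w).toLinearMap v' = ρ w (l₀ + v') from by
        rw [map_add]; rfl]
      exact hp v' hv'
  constructor
  · -- Part 1
    apply Set.Subset.antisymm
    · intro x hx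
      by_contra hxU
      have hnot : ∀ w : W, x ∉ Submodule.map ((ρ w).toLinearMap) a := by
        intro w hw
        obtain ⟨u, hu, hux⟩ := Submodule.mem_map.mp hw
        exact hxU (Set.mem_iUnion.mpr ⟨w, ⟨u, hu, hux⟩⟩)
      have hchoice : ∀ w : W, ∃ φ : (Fin n → ℂ) →ₗ[ℂ] ℂ,
          (∀ v ∈ Submodule.map ((ρ w).toLinearMap) a, φ v = 0) ∧ φ x ≠ 0 := by
        intro w
        obtain ⟨φ, h1, h2⟩ := GrAffineAux.exists_functional
          (Submodule.map ((ρ w).toLinearMap) a) (Finset.univ : Finset Unit)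
          (fun _ => x) (fun _ _ => hnot w)
        exact ⟨φ, h1, h2 () (Finset.mem_univ _)⟩
      choose φ hφ0 hφx using hchoice
      set f : W → MvPolynomial (Fin n) ℂ :=
        fun w => GrAffineAux.linPoly (φ w) + MvPolynomial.C (-(φ w (ρ w l₀))) with hfdef
      have hfJ : ∀ w : W, f w ∈ J w := by
        intro w
        refine hmemJ w _ ?_
        intro v hv
        simp only [hfdef, map_add, GrAffineAux.eval_linPoly, MvPolynomial.eval_C]
        rw [hφ0 w (ρ w v) (Submodule.mem_map.mpr ⟨v, hv, rfl⟩)]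
        ring
      set p := ∏ w : W, f w with hpdef
      have hpQ : p ∈ ⨅ w : W, J w := by
        rw [Ideal.mem_iInf]
        intro w
        rw [hpdef, ← Finset.mul_prod_erase Finset.univ f (Finset.mem_univ w)]
        exact Ideal.mul_mem_right _ _ (hfJ w)
      have hdeg1 : ∀ w ∈ (Finset.univ : Finset W), (f w).totalDegree ≤ 1 := fun w _ =>
        GrAffineAux.totalDegree_affine_le (GrAffineAux.linPoly_isHomogeneous (φ w)) _
      have hev1 : ∀ w ∈ (Finset.univ : Finset W),
          MvPolynomial.eval x (MvPolynomial.homogeneousComponent 1 (f w)) ≠ 0 := by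
        intro w _
        simp only [hfdef]
        rw [GrAffineAux.hc_one_affine (GrAffineAux.linPoly_isHomogeneous (φ w)),
          GrAffineAux.eval_linPoly]
        exact hφx w
      have hne := GrAffineAux.prod_ne x Finset.univ f hdeg1 hev1
      have hp0 : p ≠ 0 := by
        intro h0
        apply hne
        rw [← hpdef, h0]
        simp
      exact hne (hx _ ⟨p, hpQ, hp0, rfl⟩)
    · intro x hxU
      rw [Set.mem_iUnion] at hxU
      obtain ⟨w, hw⟩ := hxU
      obtain ⟨u, hu, rfl⟩ := hw
      intro q hq
      obtain ⟨p, hpQ, hp0, rfl⟩ := hq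
      exact key_vanish w u hu p (fun v hv => hvanJ w p (Ideal.mem_iInf.mp hpQ w) v hv)
  · -- Part 2
    apply Set.Subset.antisymm
    · intro x hx
      by_contra hxU
      have hy : ∀ w : W, ρ w⁻¹ x ∉ a := by
        intro w hmem
        exact hxU (Set.mem_iUnion.mpr ⟨w, ⟨ρ w⁻¹ x, hmem, hρinv' w x⟩⟩)
      obtain ⟨φ, hφ0, hφy⟩ := GrAffineAux.exists_functional a (Finset.univ : Finset W)
        (fun w : W => ρ w⁻¹ x) (fun w _ => hy w)
      set f := GrAffineAux.linPoly φ + MvPolynomial.C (-(φ l₀)) with hfdef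
      have hfP : f ∈ P := by
        refine hNSS _ ?_
        intro v hv
        simp only [hfdef, map_add, GrAffineAux.eval_linPoly, MvPolynomial.eval_C]
        rw [hφ0 v hv]
        ring
      set g : W → MvPolynomial (Fin n) ℂ := fun w => σ w f with hgdef
      set p := ∏ w : W, g w with hpdef
      have hgform : ∀ w : W, g w = σ w (GrAffineAux.linPoly φ)
          + MvPolynomial.C (-(φ l₀)) := by
        intro w
        simp only [hgdef, hfdef, map_add]
        congr 1
        rw [show (MvPolynomial.C (-(φ l₀)) : MvPolynomial (Fin n) ℂ)
            = algebraMap ℂ _ (-(φ l₀)) from rfl, AlgEquiv.commutes]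
      have hpP : p ∈ P := by
        rw [hpdef, ← Finset.mul_prod_erase Finset.univ g (Finset.mem_univ (1 : W))]
        have hg1 : g 1 = f := by rw [hgdef]; exact hσone f
        rw [hg1]
        exact Ideal.mul_mem_right _ _ hfP
      have hinvp : ∀ w₀ : W, σ w₀ p = p := by
        intro w₀
        rw [hpdef, map_prod]
        calc (∏ w : W, σ w₀ (g w)) = ∏ w : W, g (w₀ * w) := by
              refine Finset.prod_congr rfl fun w _ => ?_
              simp only [hgdef]
              rw [hσmul]
          _ = ∏ w : W, g w := by
              have := Equiv.prod_comp (Equiv.mulLeft w₀) g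
              simpa using this
      have hσlin : ∀ w : W, (σ w (GrAffineAux.linPoly φ)).IsHomogeneous 1 :=
        fun w => hlin w _ (GrAffineAux.linPoly_isHomogeneous φ)
      have hdeg1 : ∀ w ∈ (Finset.univ : Finset W), (g w).totalDegree ≤ 1 := by
        intro w _
        rw [hgform w]
        exact GrAffineAux.totalDegree_affine_le (hσlin w) _
      have hev1 : ∀ w ∈ (Finset.univ : Finset W),
          MvPolynomial.eval x (MvPolynomial.homogeneousComponent 1 (g w)) ≠ 0 := by
        intro w _
        rw [hgform w, GrAffineAux.hc_one_affine (hσlin w), hcompat w _ x,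
          GrAffineAux.eval_linPoly]
        exact hφy w (Finset.mem_univ w)
      have hne := GrAffineAux.prod_ne x Finset.univ g hdeg1 hev1
      exact hne (hx p hpP hinvp)
    · intro x hxU
      rw [Set.mem_iUnion] at hxU
      obtain ⟨w, hw⟩ := hxU
      obtain ⟨u, hu, rfl⟩ := hw
      intro p hpP hinvp
      refine key_vanish w u hu p ?_
      intro v hv
      rw [← hinvp w, hcompat w p _, hρinv]
      exact hvanP p hpP v hv
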